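/- For all integers c ≥ 1, n ≥ 0, and 0 ≤ k ≤ (c−1)·n + c·C(n,2), the colored Mahonian number satisfies i_c(n,k) = ∑_{j=0}^{k} i(n,j) · p_{≤n, c−1}(k−j), where i(n,j) is the classical Mahonian number and p_{≤n, c−1}(m) is the number of partitions of m into parts of size at most n in which each part size occurs at most c−1 times. -/

import Mathlib

open Finset

/-- The inversion number of a permutation of `Fin n`:
`inv(π) = #{(i,j) : i < j, π(i) > π(j)}`. -/
def invNum {n : ℕ} (π : Equiv.Perm (Fin n)) : ℕ :=
  ((Finset.univ : Finset (Fin n × Fin n)).filter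
    (fun p => p.1 < p.2 ∧ π p.2 < π p.1)).card

/-- The colored inversion statistic on a colored permutation `σ = (π, f)`:
`inv_c(σ) = inv(π) + ∑ f(j) + c·#{(i,j) : i < j, π(i) < π(j), f(j) ≠ 0}`. -/
def invC (c : ℕ) {n : ℕ} (σ : Equiv.Perm (Fin n) × (Fin n → Fin c)) : ℕ :=
  invNum σ.1 + (∑ j, (σ.2 j : ℕ)) +
    c * ((Finset.univ : Finset (Fin n × Fin n)).filter
      (fun p => p.1 < p.2 ∧ σ.1 p.1 < σ.1 p.2 ∧ (σ.2 p.2 : ℕ) ≠ 0)).card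

/-- The colored Mahonian number `i_c(n,k)`: the number of colored permutations
of size `n` with exactly `k` colored inversions. -/
noncomputable def mahonianC (c n k : ℕ) : ℕ :=
  Nat.card {σ : Equiv.Perm (Fin n) × (Fin n → Fin c) // invC c σ = k}

/-- The classical Mahonian number `i(n,k)`: the number of permutations of
`{1,…,n}` with exactly `k` inversions. -/
noncomputable def mahonian (n k : ℕ) : ℕ :=
  Nat.card {π : Equiv.Perm (Fin n) // invNum π = k}

/-- `p_{≤ n, r}(m)`: the number of integer partitions of `m` into parts of size
at most `n` in which each part appears at most `r` times. -/
noncomputable def pLe (n r m : ℕ) : ℕ :=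
  Nat.card {p : Nat.Partition m // (∀ a ∈ p.parts, a ≤ n) ∧ ∀ a, p.parts.count a ≤ r}


namespace CM


/-- weight of a (lehmer value, color) pair at (0-indexed) position `j` -/
def w1 (c j : ℕ) (x : Fin (j+1) × Fin c) : ℕ :=
  (x.1 : ℕ) + (if (x.2 : ℕ) = 0 then 0 else (x.2 : ℕ) + c * (j - (x.1 : ℕ)))

lemma w1_lt (c j : ℕ) (x : Fin (j+1) × Fin c) : w1 c j x < c * (j+1) := by
  have hc : 0 < c := x.2.pos
  have hv : (x.1 : ℕ) ≤ j := Nat.lt_succ_iff.mp x.1.isLt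
  have ht : (x.2 : ℕ) < c := x.2.isLt
  unfold w1
  split_ifs with h
  · have h1 : (x.1 : ℕ) ≤ c * (x.1 : ℕ) := Nat.le_mul_of_pos_left _ hc
    have h2 : c * (x.1 : ℕ) + c * (j - (x.1:ℕ)) = c * j := by
      rw [← Nat.mul_add]; congr 1; omega
    have h3 : c * (j+1) = c * j + c := by ring
    omega
  · have h1 : (x.1 : ℕ) ≤ c * (x.1 : ℕ) := Nat.le_mul_of_pos_left _ hc
    have h2 : c * (x.1 : ℕ) + c * (j - (x.1:ℕ)) = c * j := by
      rw [← Nat.mul_add]; congr 1; omega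
    have h3 : c * (j+1) = c * j + c := by ring
    omega

lemma w1_injective (c j : ℕ) : Function.Injective (w1 c j) := by
  rintro ⟨v, t⟩ ⟨v', t'⟩ h
  have hv : (v : ℕ) ≤ j := Nat.lt_succ_iff.mp v.isLt
  have hv' : (v' : ℕ) ≤ j := Nat.lt_succ_iff.mp v'.isLt
  have ht : (t : ℕ) < c := t.isLt
  have ht' : (t' : ℕ) < c := t'.isLt
  unfold w1 at h
  simp only at h
  have key : (v : ℕ) = v' ∧ (t : ℕ) = t' := by
    split_ifs at h with h1 h2 h2
    · omega
    · -- t = 0, t' ≠ 0 : RHS ≥ j+1 > LHS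
      have h3 : 2 * (j - (v':ℕ)) ≤ c * (j - (v':ℕ)) := Nat.mul_le_mul_right _ (by omega)
      omega
    · have h3 : 2 * (j - (v:ℕ)) ≤ c * (j - (v:ℕ)) := Nat.mul_le_mul_right _ (by omega)
      omega
    · -- both nonzero
      rcases lt_trichotomy (v : ℕ) (v' : ℕ) with hlt | heq | hgt
      · have e1 : c * (j - (v:ℕ)) = c * (j - (v':ℕ)) + c * ((v':ℕ) - v) := by
          rw [← Nat.mul_add]; congr 1; omega
        have e2 : c * (((v':ℕ) - v) - 1) + c = c * ((v':ℕ) - v) := by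
          rw [← Nat.mul_succ]; congr 1; omega
        have e3 : ((v':ℕ) - v) - 1 ≤ c * (((v':ℕ) - v) - 1) := Nat.le_mul_of_pos_left _ (by omega)
        omega
      · have e0 : c * (j - (v:ℕ)) = c * (j - (v':ℕ)) := by rw [heq]
        omega
      · have e1 : c * (j - (v':ℕ)) = c * (j - (v:ℕ)) + c * ((v:ℕ) - v') := by
          rw [← Nat.mul_add]; congr 1; omega
        have e2 : c * (((v:ℕ) - v') - 1) + c = c * ((v:ℕ) - v') := by
          rw [← Nat.mul_succ]; congr 1; omega
        have e3 : ((v:ℕ) - v') - 1 ≤ c * (((v:ℕ) - v') - 1) := Nat.le_mul_of_pos_left _ (by omega)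
        omega
  exact Prod.ext (Fin.ext key.1) (Fin.ext key.2)

/-- encoding as an element of `Fin (c*(j+1))` -/
noncomputable def encE (c j : ℕ) : Fin (j+1) × Fin c ≃ Fin (c * (j+1)) :=
  Equiv.ofBijective (fun x => ⟨w1 c j x, w1_lt c j x⟩)
    ((Fintype.bijective_iff_injective_and_card _).mpr
      ⟨fun a b hab => w1_injective c j (by simpa [Fin.ext_iff] using hab), by simp [mul_comm]⟩)

/-- decoding: `(a, s) ↦ a + (j+1) * s` -/
def decE (c j : ℕ) : Fin (j+1) × Fin c ≃ Fin (c * (j+1)) :=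
  (Equiv.prodComm _ _).trans finProdFinEquiv

lemma decE_val (c j : ℕ) (x : Fin (j+1) × Fin c) :
    ((decE c j x : Fin (c * (j+1))) : ℕ) = (x.1 : ℕ) + (j+1) * (x.2 : ℕ) := by
  simp [decE, finProdFinEquiv]

/-- the per-position shuffle -/
noncomputable def ψ (c j : ℕ) : Fin (j+1) × Fin c ≃ Fin (j+1) × Fin c :=
  (encE c j).trans (decE c j).symm

lemma ψ_weight (c j : ℕ) (x : Fin (j+1) × Fin c) :
    ((ψ c j x).1 : ℕ) + (j+1) * ((ψ c j x).2 : ℕ) = w1 c j x := by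
  have : decE c j (ψ c j x) = encE c j x := by
    simp [ψ]
  have h2 := decE_val c j (ψ c j x)
  rw [this] at h2
  simpa [encE] using h2.symm



/-- The Lehmer code of `π` at position `j`: number of `i < j` with `π i > π j`. -/
def lehmer {n : ℕ} (π : Equiv.Perm (Fin n)) (j : Fin n) : Fin (j.val + 1) :=
  ⟨(univ.filter (fun i : Fin n => i < j ∧ π j < π i)).card, by
    have hsub : (univ.filter (fun i : Fin n => i < j ∧ π j < π i)) ⊆ Finset.Iio j := by
      intro i hi
      simp only [mem_filter] at hi
      exact Finset.mem_Iio.mpr hi.2.1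
    have := Finset.card_le_card hsub
    rw [Fin.card_Iio] at this
    omega⟩

lemma invNum_eq_sum {n : ℕ} (π : Equiv.Perm (Fin n)) :
    invNum π = ∑ j, (lehmer π j : ℕ) := by
  unfold invNum
  rw [Finset.card_eq_sum_card_fiberwise (f := Prod.snd) (t := univ) (fun x _ => mem_univ _)]
  refine Finset.sum_congr rfl fun j _ => ?_
  show _ = (univ.filter (fun i : Fin n => i < j ∧ π j < π i)).card
  refine Finset.card_bij' (fun p _ => p.1) (fun i _ => (i, j)) ?_ ?_ ?_ ?_
  · rintro ⟨a, b⟩ hm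
    simp only [mem_filter, mem_univ, true_and] at hm ⊢
    obtain ⟨⟨h1, h2⟩, rfl⟩ := hm
    exact ⟨h1, h2⟩
  · intro i hi
    simp only [mem_filter, mem_univ, true_and] at hi
    exact Finset.mem_filter.mpr ⟨Finset.mem_filter.mpr ⟨mem_univ _, hi.1, hi.2⟩, rfl⟩
  · rintro ⟨a, b⟩ hm
    simp only [mem_filter, mem_univ, true_and] at hm
    obtain ⟨-, rfl⟩ := hm
    rfl
  · intro i _; rfl

lemma lehmer_injective {n : ℕ} (π π' : Equiv.Perm (Fin n)) (h : lehmer π = lehmer π') :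
    π = π' := by
  by_contra hne
  have hD : (univ.filter (fun j : Fin n => π j ≠ π' j)).Nonempty := by
    rw [Finset.filter_nonempty_iff]
    by_contra hcon
    push_neg at hcon
    exact hne (Equiv.ext fun j => hcon j (mem_univ j))
  set D := univ.filter (fun j : Fin n => π j ≠ π' j) with hDdef
  set j := D.max' hD with hj
  have hjD : j ∈ D := D.max'_mem hD
  have hjne : π j ≠ π' j := (Finset.mem_filter.mp hjD).2
  have hgt : ∀ i : Fin n, j < i → π i = π' i := by
    intro i hi
    by_contra hci
    have : i ∈ D := Finset.mem_filter.mpr ⟨mem_univ _, hci⟩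
    exact absurd (D.le_max' i this) (not_le.mpr hi)
  -- the set of values in positions ≤ j is the same for π and π'
  set S : Finset (Fin n) := univ.filter (fun x => π.symm x ≤ j) with hS
  have hSS : S = univ.filter (fun x => π'.symm x ≤ j) := by
    ext x
    simp only [hS, mem_filter, mem_univ, true_and]
    constructor
    · intro hx
      by_contra hc
      push_neg at hc
      have h1 : π (π'.symm x) = π' (π'.symm x) := hgt _ hc
      rw [Equiv.apply_symm_apply] at h1
      have h2 : π.symm x = π'.symm x := by
        rw [Equiv.symm_apply_eq]; exact h1.symm
      rw [h2] at hx
      exact absurd hx (not_le.mpr hc)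
    · intro hx
      by_contra hc
      push_neg at hc
      have h1 : π (π.symm x) = π' (π.symm x) := hgt _ hc
      rw [Equiv.apply_symm_apply] at h1
      have h2 : π'.symm x = π.symm x := by
        rw [Equiv.symm_apply_eq]; exact h1
      rw [h2] at hx
      exact absurd hx (not_le.mpr hc)
  -- counting values in S above π j gives the lehmer code
  have hcount : ∀ ρ : Equiv.Perm (Fin n), (univ.filter (fun x => ρ.symm x ≤ j)) = S →
      ((univ.filter (fun x => ρ.symm x ≤ j)).filter (fun x => ρ j < x)).card
        = (lehmer ρ j : ℕ) := by
    intro ρ hρ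
    show _ = ((univ.filter (fun i : Fin n => i < j ∧ ρ j < ρ i)).card : ℕ)
    refine Finset.card_bij' (fun x _ => ρ.symm x) (fun i _ => ρ i) ?_ ?_ ?_ ?_
    · intro x hx
      obtain ⟨hx1, hx2⟩ := Finset.mem_filter.mp hx
      have hx1' : ρ.symm x ≤ j := (Finset.mem_filter.mp hx1).2
      refine Finset.mem_filter.mpr ⟨mem_univ _, ?_, ?_⟩
      · refine lt_of_le_of_ne hx1' fun hcc => ?_
        rw [← hcc, Equiv.apply_symm_apply] at hx2
        exact lt_irrefl _ hx2
      · rwa [Equiv.apply_symm_apply]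
    · intro i hi
      obtain ⟨-, hi1, hi2⟩ := Finset.mem_filter.mp hi
      refine Finset.mem_filter.mpr ⟨Finset.mem_filter.mpr ⟨mem_univ _, ?_⟩, hi2⟩
      rw [Equiv.symm_apply_apply]; exact le_of_lt hi1
    · intro x _; exact Equiv.apply_symm_apply _ _
    · intro i _; exact Equiv.symm_apply_apply _ _
  have hc1 : (S.filter (fun x => π j < x)).card = (lehmer π j : ℕ) := hcount π rfl
  have hc2 : (S.filter (fun x => π' j < x)).card = (lehmer π' j : ℕ) := by
    have := hcount π' hSS.symm
    rwa [← hSS] at this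
  have hceq : (S.filter (fun x => π j < x)).card = (S.filter (fun x => π' j < x)).card := by
    rw [hc1, hc2, h]
  have hmem : π j ∈ S := by
    simp [hS, Equiv.symm_apply_apply]
  have hmem' : π' j ∈ S := by
    rw [hSS]; simp [Equiv.symm_apply_apply]
  -- strict monotonicity contradiction
  rcases lt_or_gt_of_ne hjne with hlt | hgt2
  · have hsub : insert (π' j) (S.filter (fun x => π' j < x)) ⊆ S.filter (fun x => π j < x) := by
      intro x hx
      rcases Finset.mem_insert.mp hx with rfl | hx
      · exact Finset.mem_filter.mpr ⟨hmem', hlt⟩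
      · have := Finset.mem_filter.mp hx
        exact Finset.mem_filter.mpr ⟨this.1, lt_trans hlt this.2⟩
    have hnotin : π' j ∉ S.filter (fun x => π' j < x) := by
      simp
    have := Finset.card_le_card hsub
    rw [Finset.card_insert_of_notMem hnotin] at this
    omega
  · have hsub : insert (π j) (S.filter (fun x => π j < x)) ⊆ S.filter (fun x => π' j < x) := by
      intro x hx
      rcases Finset.mem_insert.mp hx with rfl | hx
      · exact Finset.mem_filter.mpr ⟨hmem, hgt2⟩
      · have := Finset.mem_filter.mp hx
        exact Finset.mem_filter.mpr ⟨this.1, lt_trans hgt2 this.2⟩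
    have hnotin : π j ∉ S.filter (fun x => π j < x) := by
      simp
    have := Finset.card_le_card hsub
    rw [Finset.card_insert_of_notMem hnotin] at this
    omega

noncomputable def lehmerEquiv (n : ℕ) :
    Equiv.Perm (Fin n) ≃ ∀ j : Fin n, Fin (j.val + 1) :=
  Equiv.ofBijective lehmer <| (Fintype.bijective_iff_injective_and_card _).mpr
    ⟨lehmer_injective, by
      rw [Fintype.card_perm, Fintype.card_pi]
      simp only [Fintype.card_fin]
      rw [Fin.prod_univ_eq_prod_range (fun i => i + 1) n]
      exact (Finset.prod_range_add_one_eq_factorial n).symm⟩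



lemma multiset_sum_sum {α β : Type*} [AddCommMonoid β] (s : Finset α) (f : α → Multiset β) :
    (∑ i ∈ s, f i).sum = ∑ i ∈ s, (f i).sum := by
  classical
  induction s using Finset.induction with
  | empty => simp
  | insert _ _ h ih => rw [Finset.sum_insert h, Multiset.sum_add, ih, Finset.sum_insert h]

variable (n c m : ℕ)

/-- the multiset associated to a bounded color function -/
def msOf (s : Fin n → Fin c) : Multiset ℕ :=
  ∑ j : Fin n, Multiset.replicate (s j : ℕ) (j.val + 1)

lemma msOf_count (s : Fin n → Fin c) (j : Fin n) :
    (msOf n c s).count (j.val + 1) = (s j : ℕ) := by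
  rw [msOf, Multiset.count_sum']
  rw [Finset.sum_eq_single j]
  · simp [Multiset.count_replicate]
  · intro i _ hne
    rw [Multiset.count_replicate, if_neg]
    intro hcc
    exact hne (Fin.ext (by omega))
  · simp

lemma msOf_count_zero (s : Fin n → Fin c) (a : ℕ) (ha : a = 0 ∨ n < a) :
    (msOf n c s).count a = 0 := by
  rw [msOf, Multiset.count_sum']
  refine Finset.sum_eq_zero fun i _ => ?_
  rw [Multiset.count_replicate, if_neg]
  intro hcc
  have := i.isLt
  omega

lemma msOf_sum (s : Fin n → Fin c) :
    (msOf n c s).sum = ∑ j : Fin n, (j.val + 1) * (s j : ℕ) := by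
  rw [msOf, multiset_sum_sum]
  refine Finset.sum_congr rfl fun j _ => ?_
  rw [Multiset.sum_replicate, smul_eq_mul, mul_comm]

lemma msOf_eq_parts (hc : 1 ≤ c) (p : Nat.Partition m)
    (hle : ∀ a ∈ p.parts, a ≤ n) (hcount : ∀ a, p.parts.count a ≤ c - 1) :
    msOf n c (fun j => (⟨p.parts.count (j.val + 1), by
      have := hcount (j.val + 1); omega⟩ : Fin c)) = p.parts := by
  ext a
  rcases Nat.eq_zero_or_pos a with rfl | hapos
  · rw [msOf_count_zero n c _ 0 (Or.inl rfl)]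
    symm
    rw [Multiset.count_eq_zero]
    intro hmem
    exact absurd (p.parts_pos hmem) (lt_irrefl 0)
  · by_cases han : a ≤ n
    · have : a = (⟨a - 1, by omega⟩ : Fin n).val + 1 := by simp; omega
      rw [this, msOf_count]
    · rw [msOf_count_zero n c _ a (Or.inr (by omega))]
      symm
      rw [Multiset.count_eq_zero]
      intro hmem
      exact han (hle a hmem)

/-- The equivalence between bounded partitions and bounded color functions. -/
noncomputable def partEquiv (hc : 1 ≤ c) :
    {p : Nat.Partition m // (∀ a ∈ p.parts, a ≤ n) ∧ ∀ a, p.parts.count a ≤ c - 1} ≃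
    {s : Fin n → Fin c // ∑ j : Fin n, (j.val + 1) * (s j : ℕ) = m} where
  toFun p := ⟨fun j => ⟨p.1.parts.count (j.val + 1), by have := p.2.2 (j.val + 1); omega⟩, by
    have h := msOf_eq_parts n c m hc p.1 p.2.1 p.2.2
    have := congrArg Multiset.sum h
    rw [msOf_sum] at this
    rw [this, p.1.parts_sum]⟩
  invFun s := ⟨⟨msOf n c s.1, fun {i} hi => by
      rw [msOf] at hi
      obtain ⟨j, -, hj⟩ := Multiset.mem_sum.mp hi
      have := Multiset.eq_of_mem_replicate hj
      omega,
    by rw [msOf_sum]; exact s.2⟩, by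
    constructor
    · intro a ha
      by_contra hna
      rw [← Multiset.count_pos, msOf_count_zero n c _ a (Or.inr (by omega))] at ha
      exact absurd ha (lt_irrefl 0)
    · intro a
      rcases Nat.eq_zero_or_pos a with rfl | hapos
      · rw [msOf_count_zero n c _ 0 (Or.inl rfl)]; omega
      · by_cases han : a ≤ n
        · have ha : a = (⟨a - 1, by omega⟩ : Fin n).val + 1 := by simp; omega
          rw [ha, msOf_count]
          have := (s.1 ⟨a - 1, by omega⟩).isLt
          omega
        · rw [msOf_count_zero n c _ a (Or.inr (by omega))]; omega⟩
  left_inv p := by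
    apply Subtype.ext
    apply Nat.Partition.ext
    simp only
    exact msOf_eq_parts n c m hc p.1 p.2.1 p.2.2
  right_inv s := by
    apply Subtype.ext
    funext j
    apply Fin.ext
    simp only
    exact msOf_count n c s.1 j

lemma pLe_eq (hc : 1 ≤ c) :
    pLe n (c - 1) m = Nat.card {s : Fin n → Fin c // ∑ j : Fin n, (j.val + 1) * (s j : ℕ) = m} :=
  Nat.card_congr (partEquiv n c m hc)

/-- the coinversion count at position `j` -/
def coinv {n : ℕ} (π : Equiv.Perm (Fin n)) (j : Fin n) : ℕ :=
  (univ.filter (fun i : Fin n => i < j ∧ π i < π j)).card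

lemma lehmer_add_coinv {n : ℕ} (π : Equiv.Perm (Fin n)) (j : Fin n) :
    (lehmer π j : ℕ) + coinv π j = j.val := by
  have hdisj : Disjoint (univ.filter (fun i : Fin n => i < j ∧ π j < π i))
      (univ.filter (fun i : Fin n => i < j ∧ π i < π j)) := by
    rw [Finset.disjoint_filter]
    rintro i - ⟨-, h1⟩ ⟨-, h2⟩
    exact absurd (lt_trans h1 h2) (lt_irrefl _)
  have hunion : (univ.filter (fun i : Fin n => i < j ∧ π j < π i)) ∪
      (univ.filter (fun i : Fin n => i < j ∧ π i < π j)) = Finset.Iio j := by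
    rw [← Finset.filter_or]
    ext i
    simp only [mem_filter, mem_univ, true_and, Finset.mem_Iio]
    constructor
    · rintro (⟨h, -⟩ | ⟨h, -⟩) <;> exact h
    · intro h
      rcases lt_trichotomy (π j) (π i) with hl | he | hg
      · exact Or.inl ⟨h, hl⟩
      · exact absurd (π.injective he) (ne_of_gt h)
      · exact Or.inr ⟨h, hg⟩
  have := Finset.card_union_of_disjoint hdisj
  rw [hunion, Fin.card_Iio] at this
  exact this.symm

lemma colored_term_eq_sum {n c : ℕ} (π : Equiv.Perm (Fin n)) (f : Fin n → Fin c) :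
    ((Finset.univ : Finset (Fin n × Fin n)).filter
      (fun p => p.1 < p.2 ∧ π p.1 < π p.2 ∧ (f p.2 : ℕ) ≠ 0)).card
    = ∑ j : Fin n, (if (f j : ℕ) = 0 then 0 else coinv π j) := by
  rw [Finset.card_eq_sum_card_fiberwise (f := Prod.snd) (t := univ) (fun x _ => mem_univ _)]
  refine Finset.sum_congr rfl fun j _ => ?_
  by_cases hj : (f j : ℕ) = 0
  · rw [if_pos hj]
    rw [Finset.card_eq_zero]
    rw [Finset.eq_empty_iff_forall_notMem]
    rintro ⟨a, b⟩ hm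
    simp only [mem_filter, mem_univ, true_and] at hm
    obtain ⟨⟨-, -, hne⟩, rfl⟩ := hm
    exact hne hj
  · rw [if_neg hj]
    refine Finset.card_bij' (fun p _ => p.1) (fun i _ => (i, j)) ?_ ?_ ?_ ?_
    · rintro ⟨a, b⟩ hm
      simp only [mem_filter, mem_univ, true_and] at hm ⊢
      obtain ⟨⟨h1, h2, -⟩, rfl⟩ := hm
      exact ⟨h1, h2⟩
    · intro i hi
      simp only [mem_filter, mem_univ, true_and] at hi
      exact Finset.mem_filter.mpr ⟨Finset.mem_filter.mpr ⟨mem_univ _, hi.1, hi.2, hj⟩, rfl⟩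
    · rintro ⟨a, b⟩ hm
      simp only [mem_filter, mem_univ, true_and] at hm
      obtain ⟨-, rfl⟩ := hm
      rfl
    · intro i _; rfl

lemma invC_eq_sum {n c : ℕ} (π : Equiv.Perm (Fin n)) (f : Fin n → Fin c) :
    invC c (π, f) = ∑ j : Fin n, w1 c j.val (lehmer π j, f j) := by
  unfold invC
  simp only
  rw [invNum_eq_sum, colored_term_eq_sum, Finset.mul_sum, ← Finset.sum_add_distrib,
    ← Finset.sum_add_distrib]
  refine Finset.sum_congr rfl fun j _ => ?_
  unfold w1
  have := lehmer_add_coinv π j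
  by_cases hj : (f j : ℕ) = 0
  · rw [if_pos hj, if_pos hj, hj]
    simp
  · rw [if_neg hj, if_neg hj]
    have hcoinv : coinv π j = j.val - (lehmer π j : ℕ) := by omega
    rw [hcoinv]
    ring


/-- zip two dependent function types -/
def zipEquiv {n : ℕ} (α β : Fin n → Type*) :
    ((∀ j, α j) × (∀ j, β j)) ≃ (∀ j, α j × β j) where
  toFun x := fun j => (x.1 j, x.2 j)
  invFun y := (fun j => (y j).1, fun j => (y j).2)
  left_inv _ := rfl
  right_inv _ := rfl

/-- the global bijection from colored permutations to (code, color-vector) pairs -/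
noncomputable def bigE (c n : ℕ) :
    (Equiv.Perm (Fin n) × (Fin n → Fin c)) ≃
      ((∀ j : Fin n, Fin (j.val + 1)) × (Fin n → Fin c)) :=
  ((lehmerEquiv n).prodCongr (Equiv.refl _)).trans <|
    (zipEquiv _ _).trans <|
      (Equiv.piCongrRight fun j => ψ c j.val).trans (zipEquiv _ _).symm

lemma bigE_weight {c n : ℕ} (σ : Equiv.Perm (Fin n) × (Fin n → Fin c)) :
    (∑ j : Fin n, ((bigE c n σ).1 j : ℕ))
      + ∑ j : Fin n, (j.val + 1) * ((bigE c n σ).2 j : ℕ) = invC c σ := by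
  obtain ⟨π, f⟩ := σ
  rw [invC_eq_sum, ← Finset.sum_add_distrib]
  refine Finset.sum_congr rfl fun j _ => ?_
  have h1 : (bigE c n (π, f)).1 j = (ψ c j.val (lehmer π j, f j)).1 := rfl
  have h2 : (bigE c n (π, f)).2 j = (ψ c j.val (lehmer π j, f j)).2 := rfl
  rw [h1, h2]
  exact ψ_weight c j.val (lehmer π j, f j)

lemma mahonian_eq (n j : ℕ) :
    mahonian n j = Nat.card {a : ∀ i : Fin n, Fin (i.val + 1) // (∑ i, (a i : ℕ)) = j} := by
  unfold mahonian
  refine Nat.card_congr (Equiv.subtypeEquiv (lehmerEquiv n) fun π => ?_)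
  rw [invNum_eq_sum]
  rfl

/-- code-weight and color-weight -/
def wa (n : ℕ) (a : ∀ j : Fin n, Fin (j.val + 1)) : ℕ := ∑ i, (a i : ℕ)
def wb (n c : ℕ) (s : Fin n → Fin c) : ℕ := ∑ j : Fin n, (j.val + 1) * (s j : ℕ)

lemma mahonian_eq' (n j : ℕ) :
    mahonian n j = Nat.card {a : ∀ i : Fin n, Fin (i.val + 1) // wa n a = j} :=
  mahonian_eq n j

lemma pLe_eq' (n c m : ℕ) (hc : 1 ≤ c) :
    pLe n (c - 1) m = Nat.card {s : Fin n → Fin c // wb n c s = m} :=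
  pLe_eq n c m hc

lemma bigE_weight' {c n : ℕ} (σ : Equiv.Perm (Fin n) × (Fin n → Fin c)) :
    wa n (bigE c n σ).1 + wb n c (bigE c n σ).2 = invC c σ :=
  bigE_weight σ

lemma card_pairs {α β : Type*} [Fintype α] [Fintype β]
    (f : α → ℕ) (g : β → ℕ) (k : ℕ) :
    Nat.card {x : α × β // f x.1 + g x.2 = k}
      = ∑ j ∈ Finset.range (k + 1),
          Nat.card {a // f a = j} * Nat.card {b // g b = k - j} := by
  classical
  rw [Nat.card_eq_fintype_card, Fintype.card_subtype]
  rw [Finset.card_eq_sum_card_fiberwise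
    (f := fun x : α × β => f x.1) (t := Finset.range (k + 1))
    (fun x hx => by
      have h : f x.1 + g x.2 = k := (Finset.mem_filter.mp hx).2
      show f x.1 ∈ Finset.range (k + 1)
      rw [Finset.mem_range]
      omega)]
  refine Finset.sum_congr rfl fun j hj => ?_
  rw [Finset.mem_range] at hj
  have h2 : ((univ.filter fun x : α × β => f x.1 + g x.2 = k).filter (fun x => f x.1 = j))
      = (univ.filter fun a => f a = j) ×ˢ (univ.filter fun b => g b = k - j) := by
    ext ⟨a, b⟩
    simp only [Finset.mem_filter, Finset.mem_univ, true_and, Finset.mem_product]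
    omega
  rw [h2, Finset.card_product, Nat.card_eq_fintype_card, Nat.card_eq_fintype_card,
    Fintype.card_subtype, Fintype.card_subtype]

end CM

/-- `i_c(n,k) = ∑_{j=0}^{k} i(n,j) · p_{≤n, c−1}(k−j)`. -/
theorem mahonianC_eq_sum_partitions (c n k : ℕ) (hc : 1 ≤ c)
    (hk : k ≤ (c - 1) * n + c * n.choose 2) :
    mahonianC c n k = ∑ j ∈ Finset.range (k + 1), mahonian n j * pLe n (c - 1) (k - j) := by

  classical
  have e1 : mahonianC c n k
      = Nat.card {x : (∀ j : Fin n, Fin (j.val + 1)) × (Fin n → Fin c) //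
          CM.wa n x.1 + CM.wb n c x.2 = k} := by
    unfold mahonianC
    exact Nat.card_congr (Equiv.subtypeEquiv (CM.bigE c n) (fun σ => by
      rw [CM.bigE_weight' σ]))
  rw [e1, CM.card_pairs (CM.wa n) (CM.wb n c) k]
  refine Finset.sum_congr rfl fun j _ => ?_
  rw [CM.mahonian_eq' n j, CM.pLe_eq' n c (k - j) hc]
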